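/- Let w be an equistable function of an equistable graph G, and let C be a clique class (a twin class that is a clique with at least 2 vertices, or more generally a twin class forming a clique). Then there exists a positive integer i such that C = {x ∈ V(G) : w(x) = i}, i.e., w is constant on C and no vertex outside C has the same weight. -/

import Mathlib

open Finset

variable {V : Type*}

/-- Two vertices are twins if they have the same neighbors other than each other. -/
def Twins (G : SimpleGraph V) (u v : V) : Prop :=
  G.neighborSet u \ {v} = G.neighborSet v \ {u}

/-- A twin class is an equivalence class of the twin relation. -/
def TwinClass (G : SimpleGraph V) (C : Set V) : Prop :=
  ∃ u, C = {v | Twins G u v}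

/-- A stable (independent) set of vertices. -/
def IsStable (G : SimpleGraph V) (S : Set V) : Prop :=
  ∀ ⦃x⦄, x ∈ S → ∀ ⦃y⦄, y ∈ S → ¬ G.Adj x y

/-- A maximal stable set. -/
def IsMaxStable [Fintype V] [DecidableEq V] (G : SimpleGraph V) (S : Finset V) : Prop :=
  IsStable G ↑S ∧ ∀ T : Finset V, IsStable G ↑T → S ⊆ T → S = T

/-- `(w, t)` is an equistable structure of `G`: a set is a maximal stable set
iff its total weight is `t`. -/
def EquistableStruct [Fintype V] [DecidableEq V] (G : SimpleGraph V) (w : V → ℕ) (t : ℕ) : Prop :=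
  ∀ S : Finset V, IsMaxStable G S ↔ ∑ x ∈ S, w x = t

/-- `G` is `k`-equistable: it has an equistable structure with weights in `{1,…,k}`. -/
def KEquistable [Fintype V] [DecidableEq V] (G : SimpleGraph V) (k : ℕ) : Prop :=
  ∃ t : ℕ, 0 < t ∧ ∃ w : V → ℕ, (∀ x, 1 ≤ w x ∧ w x ≤ k) ∧ EquistableStruct G w t

/-- `G` is target-`t` equistable: it has an equistable structure with positive
integer weights and target `t`. -/
def TargetEquistable [Fintype V] [DecidableEq V] (G : SimpleGraph V) (t : ℕ) : Prop :=
  ∃ w : V → ℕ, (∀ x, 1 ≤ w x) ∧ EquistableStruct G w t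

lemma isMaxStable_of_dominating [Fintype V] [DecidableEq V] {G : SimpleGraph V} {T : Finset V}
    (hs : IsStable G ↑T) (hd : ∀ z, z ∉ T → ∃ y ∈ T, G.Adj z y) : IsMaxStable G T := by
  refine ⟨hs, fun T' hT' hsub => ?_⟩
  by_contra h
  obtain ⟨z, hzT', hzT⟩ := Finset.exists_of_ssubset (lt_of_le_of_ne hsub h)
  obtain ⟨y, hyT, hadj⟩ := hd z hzT
  exact hT' (Finset.mem_coe.mpr hzT') (Finset.mem_coe.mpr (hsub hyT)) hadj

lemma dominating_of_isMaxStable [Fintype V] [DecidableEq V] {G : SimpleGraph V} {T : Finset V}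
    (h : IsMaxStable G T) : ∀ z, z ∉ T → ∃ y ∈ T, G.Adj z y := by
  intro z hz
  by_contra hno
  push_neg at hno
  have hstab : IsStable G ↑(insert z T) := by
    intro a ha b hb
    simp only [Finset.coe_insert, Set.mem_insert_iff, Finset.mem_coe] at ha hb
    rcases ha with rfl | ha <;> rcases hb with rfl | hb
    · exact G.loopless.irrefl _
    · exact hno b hb
    · intro hab; exact hno a ha hab.symm
    · exact h.1 (Finset.mem_coe.mpr ha) (Finset.mem_coe.mpr hb)
  have heq := h.2 _ hstab (Finset.subset_insert z T)
  exact hz (heq ▸ Finset.mem_insert_self z T)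

lemma exists_maxStable_superset [Fintype V] [DecidableEq V] {G : SimpleGraph V}
    (A : Finset V) (hA : IsStable G ↑A) : ∃ S, A ⊆ S ∧ IsMaxStable G S := by
  classical
  let F := Finset.univ.filter (fun S : Finset V => IsStable G ↑S ∧ A ⊆ S)
  have hAF : A ∈ F := by simp [F, hA]
  obtain ⟨S, hSF, hmax⟩ := F.exists_max_image Finset.card ⟨A, hAF⟩
  simp only [F, Finset.mem_filter, Finset.mem_univ, true_and] at hSF
  refine ⟨S, hSF.2, hSF.1, fun T hT hsub => ?_⟩
  have hTF : T ∈ F := by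
    simp only [F, Finset.mem_filter, Finset.mem_univ, true_and]
    exact ⟨hT, hSF.2.trans hsub⟩
  exact Finset.eq_of_subset_of_card_le hsub (hmax T hTF)

theorem stmt7 [Fintype V] [DecidableEq V] (G : SimpleGraph V) (w : V → ℕ) (t : ℕ)
    (hpos : ∀ x, 1 ≤ w x) (hw : EquistableStruct G w t)
    (C : Set V) (hC : TwinClass G C) (hclique : G.IsClique C) :
    ∃ i : ℕ, 0 < i ∧ C = {x | w x = i} := by
  classical
  obtain ⟨u, rfl⟩ := hC
  have huu : Twins G u u := rfl
  have hsing : IsStable G ↑({u} : Finset V) := by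
    intro a ha b hb
    simp only [Finset.coe_singleton, Set.mem_singleton_iff] at ha hb
    subst ha; subst hb; exact G.loopless.irrefl _
  obtain ⟨S₀, hsub₀, hS₀⟩ := exists_maxStable_superset {u} hsing
  have huS₀ : u ∈ S₀ := hsub₀ (Finset.mem_singleton_self u)
  have hsum₀ : ∑ x ∈ S₀, w x = t := (hw S₀).mp hS₀
  -- key swap lemma
  have key : ∀ a b : V, a ≠ b → w a = w b → ∀ z, G.Adj a z → z ≠ b → G.Adj b z := by
    intro a b hab hwab z hz hzb
    by_contra hnadj
    have hpair : IsStable G ↑({b, z} : Finset V) := by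
      intro p hp q hq hpq
      simp only [Finset.coe_insert, Finset.coe_singleton, Set.mem_insert_iff,
        Set.mem_singleton_iff] at hp hq
      rcases hp with rfl | rfl <;> rcases hq with rfl | rfl
      · exact G.loopless.irrefl _ hpq
      · exact hnadj hpq
      · exact hnadj hpq.symm
      · exact G.loopless.irrefl _ hpq
    obtain ⟨S, hsubS, hS⟩ := exists_maxStable_superset _ hpair
    have hbS : b ∈ S := hsubS (by simp)
    have hzS : z ∈ S := hsubS (by simp)
    have haS : a ∉ S := fun haS =>
      hS.1 (Finset.mem_coe.mpr haS) (Finset.mem_coe.mpr hzS) hz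
    have haE : a ∉ S.erase b := fun h => haS (Finset.mem_of_mem_erase h)
    have hsumS := (hw S).mp hS
    have hsumT : ∑ y ∈ insert a (S.erase b), w y = t := by
      rw [Finset.sum_insert haE, hwab, Finset.add_sum_erase _ _ hbS, hsumS]
    have hTmax := (hw _).mpr hsumT
    have hzT : z ∈ insert a (S.erase b) :=
      Finset.mem_insert_of_mem (Finset.mem_erase.mpr ⟨hzb ∘ Eq.symm ∘ Eq.symm, hzS⟩)
    exact hTmax.1 (Finset.mem_coe.mpr (Finset.mem_insert_self a _))
      (Finset.mem_coe.mpr hzT) hz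
  refine ⟨w u, hpos u, ?_⟩
  ext x
  simp only [Set.mem_setOf_eq]
  constructor
  · -- Twins G u x → w x = w u
    intro hx
    by_cases hxu : x = u
    · subst hxu; rfl
    have hadj : G.Adj u x := hclique huu hx (Ne.symm hxu)
    have h1 : ∀ z, G.Adj u z → z ≠ x → G.Adj x z := by
      intro z hz hzx
      have hmem : z ∈ G.neighborSet u \ {x} := ⟨hz, hzx⟩
      rw [hx] at hmem
      exact hmem.1
    have hxS₀ : x ∉ S₀ := fun hxS =>
      hS₀.1 (Finset.mem_coe.mpr huS₀) (Finset.mem_coe.mpr hxS) hadj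
    have hxE : x ∉ S₀.erase u := fun h => hxS₀ (Finset.mem_of_mem_erase h)
    set T : Finset V := insert x (S₀.erase u) with hT
    have hstab : IsStable G ↑T := by
      intro a ha b hb hab
      simp only [hT, Finset.coe_insert, Finset.coe_erase, Set.mem_insert_iff,
        Set.mem_diff, Finset.mem_coe, Set.mem_singleton_iff] at ha hb
      have h2 : ∀ c, G.Adj x c → c ≠ u → G.Adj u c := by
        intro c hc hcu
        have hmem : c ∈ G.neighborSet x \ {u} := ⟨hc, hcu⟩
        rw [← hx] at hmem
        exact hmem.1
      rcases ha with ha | ⟨haS, hau⟩ <;> rcases hb with hb | ⟨hbS, hbu⟩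
      · subst ha; subst hb; exact G.loopless.irrefl _ hab
      · subst ha
        exact hS₀.1 (Finset.mem_coe.mpr huS₀) (Finset.mem_coe.mpr hbS) (h2 b hab hbu)
      · subst hb
        exact hS₀.1 (Finset.mem_coe.mpr huS₀) (Finset.mem_coe.mpr haS) (h2 a hab.symm hau)
      · exact hS₀.1 (Finset.mem_coe.mpr haS) (Finset.mem_coe.mpr hbS) hab
    have hdom : ∀ z, z ∉ T → ∃ y ∈ T, G.Adj z y := by
      intro z hz
      by_cases hzu : z = u
      · exact ⟨x, Finset.mem_insert_self x _, hzu ▸ hadj⟩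
      have hzS₀ : z ∉ S₀ := fun hzS => by
        exact hz (Finset.mem_insert_of_mem (Finset.mem_erase.mpr ⟨hzu, hzS⟩))
      obtain ⟨y, hyS, hadjzy⟩ := dominating_of_isMaxStable hS₀ z hzS₀
      by_cases hyu : y = u
      · subst hyu
        have hzx : z ≠ x := fun h => hz (h ▸ Finset.mem_insert_self x _)
        have : G.Adj x z := h1 z hadjzy.symm hzx
        exact ⟨x, Finset.mem_insert_self x _, this.symm⟩
      · exact ⟨y, Finset.mem_insert_of_mem (Finset.mem_erase.mpr ⟨hyu, hyS⟩), hadjzy⟩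
    have hTmax : IsMaxStable G T := isMaxStable_of_dominating hstab hdom
    have hsumT : ∑ y ∈ T, w y = t := (hw T).mp hTmax
    have e1 : w x + ∑ y ∈ S₀.erase u, w y = t := by
      rw [← Finset.sum_insert hxE]; exact hsumT
    have e2 : w u + ∑ y ∈ S₀.erase u, w y = t := by
      rw [Finset.add_sum_erase _ _ huS₀]; exact hsum₀
    omega
  · -- w x = w u → Twins G u x
    intro hx
    by_cases hxu : x = u
    · subst hxu; exact huu
    unfold Twins
    ext z
    simp only [Set.mem_diff, SimpleGraph.mem_neighborSet, Set.mem_singleton_iff]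
    constructor
    · rintro ⟨hz1, hz2⟩
      exact ⟨key u x (Ne.symm hxu) hx.symm z hz1 hz2, (G.ne_of_adj hz1).symm⟩
    · rintro ⟨hz1, hz2⟩
      exact ⟨key x u hxu hx z hz1 hz2, (G.ne_of_adj hz1).symm⟩
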